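/- Let q be a prime power, t ≥ 1 an integer, 2 ≤ n ≤ m integers, and M = (𝔽_q^{n×m})^t. For every integer k with 1 ≤ k ≤ t·n, the sphere volume satisfies V(S_k) ≥ q^{(m+n−k/t−2)·k − t/4} (inequality of real numbers, with real exponent), and consequently the ball volume satisfies V_k ≥ q^{(m+n−k/t−2)·k − t/4}. -/

import Mathlib

open Matrix

/-- The sum-rank weight of a tuple of matrices. -/
noncomputable def sumRankW {F : Type} [Field F] {t n m : ℕ}
    (X : Fin t → Matrix (Fin n) (Fin m) F) : ℕ :=
  ∑ i, (X i).rank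

/-- The number of tuples of matrices of sum-rank weight at most `r`
(the volume of a sum-rank ball of radius `r`). -/
noncomputable def ballVol (F : Type) [Field F] [Fintype F] (t n m r : ℕ) : ℕ :=
  Nat.card {X : Fin t → Matrix (Fin n) (Fin m) F // sumRankW X ≤ r}

/-- The number of tuples of matrices of sum-rank weight exactly `k`
(the volume of a sum-rank sphere of radius `k`). -/
noncomputable def sphereVol (F : Type) [Field F] [Fintype F] (t n m k : ℕ) : ℕ :=
  Nat.card {X : Fin t → Matrix (Fin n) (Fin m) F // sumRankW X = k}


section Aux

variable {F : Type} [Field F] [Fintype F]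

private lemma rank_reindex_rect {k l o p : Type} [Fintype l] [Fintype p]
    (e₁ : k ≃ o) (e₂ : l ≃ p) (A : Matrix k l F) :
    (Matrix.reindex e₁ e₂ A).rank = A.rank := by
  rw [Matrix.rank, Matrix.rank, Matrix.mulVecLin_reindex, LinearMap.range_comp,
    LinearMap.range_comp, LinearEquiv.range, Submodule.map_top, LinearEquiv.finrank_map_eq]

private lemma rank_block {r n' m' : ℕ} (T : GL (Fin r) F) (B : Matrix (Fin r) (Fin m') F)
    (C : Matrix (Fin n') (Fin r) F) :
    (Matrix.fromBlocks T.val B C (C * (T⁻¹).val * B)).rank = r := by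
  have hTT : (T.val : Matrix (Fin r) (Fin r) F) * (T⁻¹).val = 1 := T.mul_inv
  have hfact : Matrix.fromBlocks (T.val : Matrix (Fin r) (Fin r) F) B C (C * (T⁻¹).val * B)
      = fromRows (T.val : Matrix (Fin r) (Fin r) F) C *
        fromCols (1 : Matrix (Fin r) (Fin r) F) ((T⁻¹).val * B) := by
    have h2 : fromRows (T.val : Matrix (Fin r) (Fin r) F) C *
        fromCols (1 : Matrix (Fin r) (Fin r) F) ((T⁻¹).val * B)
        = Matrix.fromBlocks ((T.val : Matrix (Fin r) (Fin r) F) * 1) (T.val * ((T⁻¹).val * B))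
          (C * (1 : Matrix (Fin r) (Fin r) F)) (C * ((T⁻¹).val * B)) := by
      rw [fromRows_mul, mul_fromCols, mul_fromCols,
        fromRows_fromCols_eq_fromBlocks]
    rw [h2, Matrix.mul_one, Matrix.mul_one, ← Matrix.mul_assoc, hTT, Matrix.one_mul, ← Matrix.mul_assoc]
  refine le_antisymm ?_ ?_
  · rw [hfact]
    exact le_trans (Matrix.rank_mul_le_left _ _)
      (by simpa using Matrix.rank_le_card_width (fromRows (T.val : Matrix (Fin r) (Fin r) F) C))
  · have hPXQ : (fromCols (1 : Matrix (Fin r) (Fin r) F) (0 : Matrix (Fin r) (Fin n') F)) *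
        ((Matrix.fromBlocks T.val B C (C * (T⁻¹).val * B)) *
          (fromRows (1 : Matrix (Fin r) (Fin r) F) (0 : Matrix (Fin m') (Fin r) F)))
        = (T.val : Matrix (Fin r) (Fin r) F) := by
      rw [hfact, Matrix.mul_assoc, fromCols_mul_fromRows, Matrix.mul_one, Matrix.mul_zero,
        add_zero, ← Matrix.mul_assoc, fromCols_mul_fromRows, Matrix.one_mul,
        Matrix.zero_mul, add_zero, Matrix.mul_one]
    have hT : (T.val : Matrix (Fin r) (Fin r) F).rank = r := by
      rw [Matrix.rank_of_isUnit _ T.isUnit]; simp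
    have h1 := le_trans
      (Matrix.rank_mul_le_right (fromCols (1 : Matrix (Fin r) (Fin r) F) (0 : Matrix (Fin r) (Fin n') F))
        ((Matrix.fromBlocks T.val B C (C * (T⁻¹).val * B)) *
          (fromRows (1 : Matrix (Fin r) (Fin r) F) (0 : Matrix (Fin m') (Fin r) F))))
      (Matrix.rank_mul_le_left (Matrix.fromBlocks T.val B C (C * (T⁻¹).val * B))
        (fromRows (1 : Matrix (Fin r) (Fin r) F) (0 : Matrix (Fin m') (Fin r) F)))
    rw [hPXQ] at h1
    exact le_trans hT.ge h1

private lemma card_mat (q : ℕ) (hq : Fintype.card F = q) (a b : ℕ) :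
    Nat.card (Matrix (Fin a) (Fin b) F) = q ^ (a * b) := by
  rw [Nat.card_congr Matrix.of.symm, Nat.card_fun, Nat.card_fun, Nat.card_eq_fintype_card,
    hq, Nat.card_eq_fintype_card, Nat.card_eq_fintype_card, Fintype.card_fin, Fintype.card_fin,
    ← pow_mul, mul_comm]

end Aux

section Aux2

variable {F : Type} [Field F] [Fintype F]

private lemma card_rank_ge (q : ℕ) (hq : Fintype.card F = q) {r n m : ℕ}
    (hrn : r ≤ n) (hrm : r ≤ m) :
    q ^ (r * (m + n - 1 - r)) ≤ Nat.card {X : Matrix (Fin n) (Fin m) F // X.rank = r} := by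
  have hq2 : 2 ≤ q := hq ▸ Fintype.one_lt_card
  rcases Nat.eq_zero_or_pos r with rfl | hr
  · haveI hne : Nonempty {X : Matrix (Fin n) (Fin m) F // X.rank = 0} :=
      ⟨⟨0, Matrix.rank_zero⟩⟩
    simpa using Nat.one_le_iff_ne_zero.mpr (Nat.card_pos (α := {X : Matrix (Fin n) (Fin m) F // X.rank = 0})).ne'
  · let e₁ : Fin r ⊕ Fin (n - r) ≃ Fin n := finSumFinEquiv.trans (finCongr (by omega))
    let e₂ : Fin r ⊕ Fin (m - r) ≃ Fin m := finSumFinEquiv.trans (finCongr (by omega))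
    let f : GL (Fin r) F × Matrix (Fin r) (Fin (m - r)) F × Matrix (Fin (n - r)) (Fin r) F →
        {X : Matrix (Fin n) (Fin m) F // X.rank = r} := fun p =>
      ⟨Matrix.reindex e₁ e₂ (Matrix.fromBlocks p.1.val p.2.1 p.2.2
          (p.2.2 * (p.1⁻¹).val * p.2.1)),
       by rw [rank_reindex_rect, rank_block]⟩
    have hf : Function.Injective f := by
      rintro ⟨T₁, B₁, C₁⟩ ⟨T₂, B₂, C₂⟩ h
      have h' : Matrix.fromBlocks T₁.val B₁ C₁ (C₁ * (T₁⁻¹).val * B₁)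
          = Matrix.fromBlocks T₂.val B₂ C₂ (C₂ * (T₂⁻¹).val * B₂) :=
        (Matrix.reindex e₁ e₂).injective (congrArg Subtype.val h)
      have h11 := congrArg Matrix.toBlocks₁₁ h'
      have h12 := congrArg Matrix.toBlocks₁₂ h'
      have h21 := congrArg Matrix.toBlocks₂₁ h'
      rw [Matrix.toBlocks_fromBlocks₁₁, Matrix.toBlocks_fromBlocks₁₁] at h11
      rw [Matrix.toBlocks_fromBlocks₁₂, Matrix.toBlocks_fromBlocks₁₂] at h12
      rw [Matrix.toBlocks_fromBlocks₂₁, Matrix.toBlocks_fromBlocks₂₁] at h21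
      exact Prod.ext (Units.ext h11) (Prod.ext h12 h21)
    have hcard : Nat.card (GL (Fin r) F × Matrix (Fin r) (Fin (m - r)) F ×
        Matrix (Fin (n - r)) (Fin r) F) ≤
        Nat.card {X : Matrix (Fin n) (Fin m) F // X.rank = r} :=
      Nat.card_le_card_of_injective f hf
    rw [Nat.card_prod, Nat.card_prod, card_mat q hq, card_mat q hq] at hcard
    have hGL : q ^ ((r - 1) * r) ≤ Nat.card (GL (Fin r) F) := by
      rw [Matrix.card_GL_field, hq]
      calc q ^ ((r - 1) * r) = ∏ _i : Fin r, q ^ (r - 1) := by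
            rw [Finset.prod_const, Finset.card_univ, Fintype.card_fin, ← pow_mul]
        _ ≤ ∏ i : Fin r, (q ^ r - q ^ (i : ℕ)) := by
            apply Finset.prod_le_prod'
            intro i _
            have h1 : q ^ r = q * q ^ (r - 1) := by
              rw [← pow_succ']; congr 1; omega
            have h2 : q ^ (i : ℕ) ≤ q ^ (r - 1) :=
              Nat.pow_le_pow_right (by omega) (by omega)
            have h3 : 2 * q ^ (r - 1) ≤ q * q ^ (r - 1) :=
              Nat.mul_le_mul_right _ hq2
            omega
    have hexp : r * (m + n - 1 - r) = (r - 1) * r + (r * (m - r) + (n - r) * r) := by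
      zify [hrn, hrm, hr, show r ≤ m + n - 1 by omega, show 1 ≤ m + n by omega]
      ring
    calc q ^ (r * (m + n - 1 - r))
        = q ^ ((r - 1) * r) * (q ^ (r * (m - r)) * q ^ ((n - r) * r)) := by
          rw [hexp, pow_add, pow_add]
      _ ≤ Nat.card (GL (Fin r) F) * (q ^ (r * (m - r)) * q ^ ((n - r) * r)) :=
          Nat.mul_le_mul_right _ hGL
      _ ≤ Nat.card {X : Matrix (Fin n) (Fin m) F // X.rank = r} := hcard

private lemma sum_ite_lt {β : Type*} [AddCommMonoid β] (t s : ℕ) (hs : s ≤ t) (c₁ c₂ : β) :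
    ∑ i : Fin t, (if (i : ℕ) < s then c₁ else c₂) = s • c₁ + (t - s) • c₂ := by
  rw [Fin.sum_univ_eq_sum_range (fun j => if j < s then c₁ else c₂) t,
    Finset.range_eq_Ico, ← Finset.sum_Ico_consecutive _ (Nat.zero_le s) hs]
  have h1 : ∑ j ∈ Finset.Ico 0 s, (if j < s then c₁ else c₂) = s • c₁ := by
    rw [Finset.sum_congr rfl (fun j hj => if_pos (Finset.mem_Ico.mp hj).2),
      Finset.sum_const, Nat.card_Ico, Nat.sub_zero]
  have h2 : ∑ j ∈ Finset.Ico s t, (if j < s then c₁ else c₂) = (t - s) • c₂ := by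
    rw [Finset.sum_congr rfl (fun j hj => if_neg (by
      have := (Finset.mem_Ico.mp hj).1; omega)),
      Finset.sum_const, Nat.card_Ico]
  rw [h1, h2]

private lemma sphere_ge (q : ℕ) (hq : Fintype.card F = q) (t n m : ℕ) (r : Fin t → ℕ)
    (hrn : ∀ i, r i ≤ n) (hrm : ∀ i, r i ≤ m) :
    q ^ (∑ i, r i * (m + n - 1 - r i)) ≤
      Nat.card {X : Fin t → Matrix (Fin n) (Fin m) F // sumRankW X = ∑ i, r i} := by
  let f : (∀ i : Fin t, {X : Matrix (Fin n) (Fin m) F // X.rank = r i}) →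
      {X : Fin t → Matrix (Fin n) (Fin m) F // sumRankW X = ∑ i, r i} :=
    fun Y => ⟨fun i => (Y i).1, by
      unfold sumRankW
      exact Finset.sum_congr rfl (fun i _ => (Y i).2)⟩
  have hf : Function.Injective f := by
    intro Y₁ Y₂ h
    funext i
    exact Subtype.ext (congrFun (congrArg Subtype.val h) i)
  have hcard : Nat.card (∀ i : Fin t, {X : Matrix (Fin n) (Fin m) F // X.rank = r i}) ≤
      Nat.card {X : Fin t → Matrix (Fin n) (Fin m) F // sumRankW X = ∑ i, r i} :=
    Nat.card_le_card_of_injective f hf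
  rw [Nat.card_pi] at hcard
  refine le_trans ?_ hcard
  rw [← Finset.prod_pow_eq_pow_sum]
  exact Finset.prod_le_prod' (fun i _ => card_rank_ge q hq (hrn i) (hrm i))

end Aux2

theorem stmt_2 (F : Type) [Field F] [Fintype F] (q t n m k : ℕ)
    (hq : Fintype.card F = q) (ht : 1 ≤ t) (hn : 2 ≤ n) (hnm : n ≤ m)
    (hk1 : 1 ≤ k) (hk2 : k ≤ t * n) :
    (q : ℝ) ^ (((m : ℝ) + n - (k : ℝ) / t - 2) * k - (t : ℝ) / 4) ≤ sphereVol F t n m k ∧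
    (q : ℝ) ^ (((m : ℝ) + n - (k : ℝ) / t - 2) * k - (t : ℝ) / 4) ≤ ballVol F t n m k := by
  classical
  have hq2 : 2 ≤ q := hq ▸ Fintype.one_lt_card
  have ht0 : 0 < t := ht
  set a := k / t with ha
  set s := k % t with hs
  have hks : t * a + s = k := by rw [ha, hs, Nat.add_comm]; exact Nat.mod_add_div k t
  have hst : s < t := Nat.mod_lt _ ht0
  have han : a ≤ n := by
    by_contra h
    push_neg at h
    have h1 : t * (n + 1) ≤ t * a := Nat.mul_le_mul_left t h
    have h2 : t * (n + 1) = t * n + t := Nat.mul_succ t n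
    omega
  have han' : 0 < s → a + 1 ≤ n := by
    intro hs0
    by_contra h
    push_neg at h
    have : t * n ≤ t * a := Nat.mul_le_mul_left t (by omega)
    omega
  set r : Fin t → ℕ := fun i => if (i : ℕ) < s then a + 1 else a with hr
  have hrn : ∀ i, r i ≤ n := by
    intro i
    rw [hr]
    dsimp only
    split_ifs with h
    · exact han' (by omega)
    · exact han
  have hrm : ∀ i, r i ≤ m := fun i => le_trans (hrn i) hnm
  have hsumr : ∑ i, r i = k := by
    rw [hr]
    rw [sum_ite_lt t s hst.le (a + 1) a]
    simp only [smul_eq_mul]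
    have h2 : s * (a + 1) + (t - s) * a = t * a + s := by
      zify [hst.le]; ring
    omega
  set E := ∑ i, r i * (m + n - 1 - r i) with hE
  have hsphN : q ^ E ≤ sphereVol F t n m k := by
    have h := sphere_ge q hq t n m r hrn hrm
    rw [hsumr] at h
    exact h
  have hballN : sphereVol F t n m k ≤ ballVol F t n m k := by
    refine Nat.card_le_card_of_injective
      (fun X : {X : Fin t → Matrix (Fin n) (Fin m) F // sumRankW X = k} =>
        (⟨X.1, le_of_eq X.2⟩ : {X : Fin t → Matrix (Fin n) (Fin m) F // sumRankW X ≤ k})) ?_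
    intro x y h
    have hv := congrArg Subtype.val h
    exact Subtype.ext hv
  -- cast computations
  have hterm : ∀ i : Fin t, ((r i * (m + n - 1 - r i) : ℕ) : ℝ) =
      if (i : ℕ) < s then ((a : ℝ) + 1) * ((m : ℝ) + n - 1 - ((a : ℝ) + 1))
      else (a : ℝ) * ((m : ℝ) + n - 1 - (a : ℝ)) := by
    intro i
    by_cases h : (i : ℕ) < s
    · have hri : r i = a + 1 := by rw [hr]; simp [h]
      have hsub : a + 1 ≤ m + n - 1 := by
        have := han' (by omega)
        omega
      rw [hri, if_pos h, Nat.cast_mul, Nat.cast_sub hsub,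
        Nat.cast_sub (by omega : 1 ≤ m + n)]
      push_cast
      ring
    · have hri : r i = a := by rw [hr]; simp [h]
      have hsub : a ≤ m + n - 1 := by omega
      rw [hri, if_neg h, Nat.cast_mul, Nat.cast_sub hsub,
        Nat.cast_sub (by omega : 1 ≤ m + n)]
      push_cast
      ring
  have hEcast : (E : ℝ) = (s : ℝ) * (((a : ℝ) + 1) * ((m : ℝ) + n - 1 - ((a : ℝ) + 1)))
      + ((t : ℝ) - s) * ((a : ℝ) * ((m : ℝ) + n - 1 - (a : ℝ))) := by
    rw [hE, Nat.cast_sum, Finset.sum_congr rfl (fun i _ => hterm i),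
      sum_ite_lt t s hst.le _ _]
    simp only [nsmul_eq_mul]
    rw [Nat.cast_sub hst.le]
  have hkr : (k : ℝ) = (t : ℝ) * a + s := by
    rw [← hks]; push_cast; ring
  have hT0 : (0 : ℝ) < t := by exact_mod_cast ht0
  have hmain : ((m : ℝ) + n - (k : ℝ) / t - 2) * k - (t : ℝ) / 4 ≤ (E : ℝ) := by
    rw [hEcast, hkr, ← sub_nonneg]
    have hkey : ((s : ℝ) * (((a : ℝ) + 1) * ((m : ℝ) + n - 1 - ((a : ℝ) + 1)))
        + ((t : ℝ) - s) * ((a : ℝ) * ((m : ℝ) + n - 1 - (a : ℝ))))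
        - ((((m : ℝ) + n - ((t : ℝ) * a + s) / t - 2) * ((t : ℝ) * a + s)) - (t : ℝ) / 4)
        = (((s : ℝ) - t / 2) ^ 2 + t * ((t : ℝ) * a + s)) / t := by
      field_simp
      ring
    rw [hkey]
    positivity
  have h1 : (q : ℝ) ^ (((m : ℝ) + n - (k : ℝ) / t - 2) * k - (t : ℝ) / 4)
      ≤ (q : ℝ) ^ ((E : ℕ) : ℝ) :=
    Real.rpow_le_rpow_of_exponent_le (by exact_mod_cast Nat.one_le_of_lt hq2) hmain
  rw [Real.rpow_natCast] at h1
  have h2 : (q : ℝ) ^ E ≤ (sphereVol F t n m k : ℝ) := by exact_mod_cast hsphN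
  have h3 : (sphereVol F t n m k : ℝ) ≤ (ballVol F t n m k : ℝ) := by exact_mod_cast hballN
  exact ⟨le_trans h1 h2, le_trans h1 (le_trans h2 h3)⟩
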